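/- Homotopy isolation determines homotopy class (Lemma on homotopically isolated objects, as used for the movie-move checks): Let R be a commutative ring, 𝒞 an R-linear preadditive category, K and L cochain complexes in 𝒞 indexed by ℤ, and f, g : K ⟶ L chain maps. Fix i ∈ ℤ and let ι : A ⟶ K.X i be a split monomorphism exhibiting A as a direct summand of K.X i, and assume A is homotopically isolated with respect to L at degree i: for every family of morphisms h_j : K.X j ⟶ L.X (j−1), one has ι ≫ h_i ≫ d^L_{i−1} + ι ≫ d^K_i ≫ h_{i+1} = 0. Suppose α : R is a scalar such that f is chain homotopic to α • g, that f and g agree on A in degree i (ι ≫ f_i = ι ≫ g_i), that ι ≫ g_i ≠ 0, and that the hom-module Hom_𝒞(A, L.X i) is torsion-free over R (r • m = 0 with m ≠ 0 implies r = 0). Then α = 1, and f and g are chain homotopic. -/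
import Mathlib


open CategoryTheory

/-- **Homotopy isolation determines homotopy class.**  Let `K`, `L` be ℤ-indexed cochain
complexes in an `R`-linear preadditive category, `f g : K ⟶ L` chain maps, and
`ι : A ⟶ K.X i` a split monomorphism exhibiting `A` as a homotopically isolated direct
summand of `K.X i` with respect to `L`.  If `f` is chain homotopic to `α • g`, `f` and `g`
agree on `A` in degree `i`, `ι ≫ g.f i ≠ 0`, and `Hom(A, L.X i)` is torsion-free over `R`,
then `α = 1` and `f` and `g` are chain homotopic. -/
theorem homotopy_isolation_determines_homotopy_class
    {R : Type*} [CommRing R] {𝒞 : Type*} [Category 𝒞] [Preadditive 𝒞]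
    [CategoryTheory.Linear R 𝒞]
    (K L : CochainComplex 𝒞 ℤ) (f g : K ⟶ L) (i : ℤ) (A : 𝒞)
    (ι : A ⟶ K.X i) [IsSplitMono ι]
    -- `A` is homotopically isolated with respect to `L` at degree `i`:
    (hiso : ∀ h : ∀ j : ℤ, K.X j ⟶ L.X (j - 1),
      ι ≫ h i ≫ L.d (i - 1) i +
        ι ≫ K.d i (i + 1) ≫ h (i + 1) ≫
          eqToHom (congrArg L.X (by omega : i + 1 - 1 = i)) = 0)
    (α : R)
    -- `f` is chain homotopic to `α • g`:
    (hhtpy : ∃ h : ∀ j : ℤ, K.X j ⟶ L.X (j - 1), ∀ m : ℤ,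
      f.f m - α • g.f m =
        h m ≫ L.d (m - 1) m +
          K.d m (m + 1) ≫ h (m + 1) ≫
            eqToHom (congrArg L.X (by omega : m + 1 - 1 = m)))
    -- `f` and `g` agree on `A` in degree `i`:
    (hagree : ι ≫ f.f i = ι ≫ g.f i)
    -- the restriction of `g` to `A` is nonzero:
    (hne : ι ≫ g.f i ≠ 0)
    -- the hom-module `Hom(A, L.X i)` is torsion-free over `R`:
    (htf : ∀ (r : R) (m : A ⟶ L.X i), r • m = 0 → m ≠ 0 → r = 0) :
    α = 1 ∧
      ∃ h : ∀ j : ℤ, K.X j ⟶ L.X (j - 1), ∀ m : ℤ,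
        f.f m - g.f m =
          h m ≫ L.d (m - 1) m +
            K.d m (m + 1) ≫ h (m + 1) ≫
              eqToHom (congrArg L.X (by omega : m + 1 - 1 = m)) := by
  obtain ⟨h, hh⟩ := hhtpy
  have key : ι ≫ (f.f i - α • g.f i) = 0 := by
    rw [hh i]
    have := hiso h
    rw [Preadditive.comp_add]
    convert this using 2
  have key2 : ι ≫ f.f i - α • (ι ≫ g.f i) = 0 := by
    simpa [Preadditive.comp_sub, Linear.comp_smul] using key
  rw [hagree] at key2
  have : (1 - α) • (ι ≫ g.f i) = 0 := by
    rw [sub_smul, one_smul]; exact key2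
  have hα : (1 : R) - α = 0 := htf _ _ this hne
  have hα1 : α = 1 := (sub_eq_zero.mp hα).symm
  refine ⟨hα1, ⟨h, fun m => ?_⟩⟩
  have := hh m
  rw [hα1, one_smul] at this
  exact this
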